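/- Let L ≥ 2, n ≥ 1, k ≥ 1, and consider the hierarchical lattice H_L with blocks. Suppose Λ_{n+k} is partitioned into L^k many n-blocks and we form a graph G on these n-blocks where (deterministically) each n-block has been assigned a cluster of density at least θ ∈ (0,1], with at most one bad block; assume moreover all 'nice' conditions of Claim niceness hold: every (n+j)-block (j = 1,…,k) is nice, meaning any two of its L children sub-blocks each containing a cluster of density ≥ 0.4 have their largest clusters linked. If θ·(1 − 1/L) ≥ 0.4 and θ ≥ 0.9, then Λ_{n+k} contains a connected cluster of size at least (1 − L^{−k})·θ·L^{n+k}, in particular of density at least θ − L^{−k}. -/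

import Mathlib

/-- Reachability inside a set `S` along open edges of `G`. -/
def reachIn (G : SimpleGraph ℕ) (S : Set ℕ) : ℕ → ℕ → Prop :=
  Relation.ReflTransGen (fun a b => a ∈ S ∧ b ∈ S ∧ G.Adj a b)

/-- The open cluster of `x` inside the set `S`. -/
def clusterIn (G : SimpleGraph ℕ) (S : Set ℕ) (x : ℕ) : Set ℕ :=
  {y ∈ S | reachIn G S x y}

/-- The `b`-th block of level `n + j` in the hierarchical lattice of side length `L`
(vertices `[b·L^{n+j}, (b+1)·L^{n+j})`). -/
def hblock (L n j b : ℕ) : Set ℕ :=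
  Set.Ico (b * L ^ (n + j)) ((b + 1) * L ^ (n + j))

lemma reachIn_mono {G : SimpleGraph ℕ} {S T : Set ℕ} (h : S ⊆ T) {x y : ℕ}
    (hr : reachIn G S x y) : reachIn G T x y :=
  Relation.ReflTransGen.mono (fun a b (hab : a ∈ S ∧ b ∈ S ∧ G.Adj a b) =>
    (⟨h hab.1, h hab.2.1, hab.2.2⟩ : a ∈ T ∧ b ∈ T ∧ G.Adj a b)) x y hr

lemma reachIn_symm {G : SimpleGraph ℕ} {S : Set ℕ} {x y : ℕ}
    (h : reachIn G S x y) : reachIn G S y x := by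
  induction h with
  | refl => exact Relation.ReflTransGen.refl
  | tail hab hbc ih => exact Relation.ReflTransGen.head ⟨hbc.2.1, hbc.1, hbc.2.2.symm⟩ ih

lemma clusterIn_subset (G : SimpleGraph ℕ) (S : Set ℕ) (x : ℕ) :
    clusterIn G S x ⊆ S := fun _ hy => hy.1

lemma hblock_finite (L n j b : ℕ) : (hblock L n j b).Finite := Set.finite_Ico _ _

lemma sum_ncard_le (C : Set ℕ) (hC : C.Finite) (I : Finset ℕ) (K : ℕ → Set ℕ)
    (hsub : ∀ i ∈ I, K i ⊆ C)
    (hdisj : ∀ i ∈ I, ∀ j ∈ I, i ≠ j → Disjoint (K i) (K j)) :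
    ∑ i ∈ I, (K i).ncard ≤ C.ncard := by
  induction I using Finset.induction generalizing C with
  | empty => simp
  | @insert a s hins ih =>
    rw [Finset.sum_insert hins]
    have hKa : K a ⊆ C := hsub a (Finset.mem_insert_self a s)
    have h1 : ∑ i ∈ s, (K i).ncard ≤ (C \ K a).ncard := by
      apply ih
      · exact hC.diff
      · intro i hi
        have hsubC := hsub i (Finset.mem_insert_of_mem hi)
        have hd := hdisj i (Finset.mem_insert_of_mem hi) a (Finset.mem_insert_self a s)
          (by rintro rfl; exact hins hi)
        intro x hx
        exact ⟨hsubC hx, fun hxa => (Set.disjoint_left.mp hd) hx hxa⟩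
      · intro i hi j hj hij
        exact hdisj i (Finset.mem_insert_of_mem hi) j (Finset.mem_insert_of_mem hj) hij
    calc (K a).ncard + ∑ i ∈ s, (K i).ncard ≤ (K a).ncard + (C \ K a).ncard := by omega
      _ = C.ncard := by
          rw [add_comm]; exact Set.ncard_diff_add_ncard_of_subset hKa hC

lemma merge_step (L n k : ℕ) (hL : 2 ≤ L) (G : SimpleGraph ℕ)
    (Kmax : ℕ → ℕ → Set ℕ)
    (hKcluster : ∀ j b, j ≤ k → b < L ^ (k - j) →
      ∃ x ∈ hblock L n j b, Kmax j b = clusterIn G (hblock L n j b) x)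
    (hKmaximal : ∀ j b, j ≤ k → b < L ^ (k - j) →
      ∀ x ∈ hblock L n j b,
        (clusterIn G (hblock L n j b) x).ncard ≤ (Kmax j b).ncard)
    (hnice : ∀ j u, 1 ≤ j → j ≤ k → u < L ^ (k - j) →
      ∀ i i' : ℕ, i < L → i' < L → i ≠ i' →
        0.4 * (L : ℝ) ^ (n + j - 1) ≤ ((Kmax (j - 1) (u * L + i)).ncard : ℝ) →
        0.4 * (L : ℝ) ^ (n + j - 1) ≤ ((Kmax (j - 1) (u * L + i')).ncard : ℝ) →
        ∃ x ∈ Kmax (j - 1) (u * L + i), ∃ y ∈ Kmax (j - 1) (u * L + i'), G.Adj x y)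
    (j u : ℕ) (hjk : j + 1 ≤ k) (hu : u < L ^ (k - (j + 1)))
    (I : Finset ℕ) (hI : I.Nonempty) (hIL : ∀ i ∈ I, i < L)
    (hbig : ∀ i ∈ I, 0.4 * (L : ℝ) ^ (n + j) ≤ ((Kmax j (u * L + i)).ncard : ℝ)) :
    ∑ i ∈ I, (Kmax j (u * L + i)).ncard ≤ (Kmax (j + 1) u).ncard := by
  have hL0 : 0 < L := by omega
  have hpe : k - (j + 1) + 1 = k - j := by omega
  have hlt : ∀ i, i < L → u * L + i < L ^ (k - j) := by
    intro i hi
    calc u * L + i < (u + 1) * L := by nlinarith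
      _ ≤ L ^ (k - (j + 1)) * L := Nat.mul_le_mul_right _ hu
      _ = L ^ (k - (j + 1) + 1) := (pow_succ L _).symm
      _ = L ^ (k - j) := by rw [hpe]
  have hp : L ^ (n + (j + 1)) = L ^ (n + j) * L := pow_succ L (n + j)
  have hsub : ∀ i, i < L → hblock L n j (u * L + i) ⊆ hblock L n (j + 1) u := by
    intro i hi x hx
    simp only [hblock, Set.mem_Ico] at hx ⊢
    obtain ⟨h1, h2⟩ := hx
    rw [hp]
    constructor
    · calc u * (L ^ (n + j) * L) = (u * L) * L ^ (n + j) := by ring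
        _ ≤ (u * L + i) * L ^ (n + j) := Nat.mul_le_mul_right _ (Nat.le_add_right _ _)
        _ ≤ x := h1
    · calc x < (u * L + i + 1) * L ^ (n + j) := h2
        _ ≤ ((u + 1) * L) * L ^ (n + j) := by
            apply Nat.mul_le_mul_right
            calc u * L + i + 1 ≤ u * L + L := by omega
              _ = (u + 1) * L := by ring
        _ = (u + 1) * (L ^ (n + j) * L) := by ring
  have hdisjblock : ∀ i i', i ≠ i' →
      Disjoint (hblock L n j (u * L + i)) (hblock L n j (u * L + i')) := by
    intro i i' hne
    rw [Set.disjoint_left]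
    intro x hx hx'
    simp only [hblock, Set.mem_Ico] at hx hx'
    rcases Nat.lt_or_ge i i' with h | h
    · have := Nat.mul_le_mul_right (L ^ (n + j)) (show u * L + i + 1 ≤ u * L + i' by omega)
      omega
    · have h' : i' < i := by omega
      have := Nat.mul_le_mul_right (L ^ (n + j)) (show u * L + i' + 1 ≤ u * L + i by omega)
      omega
  have hxall := fun i (hi : i < L) => hKcluster j (u * L + i) (by omega) (hlt i hi)
  choose xi hxi hKeq using hxall
  have hKsub : ∀ i (hi : i < L), Kmax j (u * L + i) ⊆ hblock L n j (u * L + i) := by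
    intro i hi
    rw [hKeq i hi]
    exact clusterIn_subset _ _ _
  obtain ⟨i₀, hi₀I⟩ := hI
  have hi₀L : i₀ < L := hIL i₀ hi₀I
  set x₀ := xi i₀ hi₀L with hx₀def
  set parent := hblock L n (j + 1) u with hparent
  have hx₀p : x₀ ∈ parent := hsub i₀ hi₀L (hxi i₀ hi₀L)
  have claim : ∀ i ∈ I, Kmax j (u * L + i) ⊆ clusterIn G parent x₀ := by
    intro i hiI w hw
    by_cases hcase : i = i₀
    · subst hcase
      rw [hKeq i hi₀L] at hw
      exact ⟨hsub i hi₀L hw.1, reachIn_mono (hsub i hi₀L) hw.2⟩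
    · have hiL := hIL i hiI
      have hnn := hnice (j + 1) u (by omega) hjk hu i₀ i hi₀L hiL
        (fun h => hcase h.symm) (hbig i₀ hi₀I) (hbig i hiI)
      obtain ⟨p, hpK, q, hqK, hadj⟩ := hnn
      simp only [Nat.add_sub_cancel] at hpK hqK
      rw [hKeq i₀ hi₀L] at hpK
      rw [hKeq i hiL] at hqK
      rw [hKeq i hiL] at hw
      have hpmem : p ∈ parent := hsub i₀ hi₀L hpK.1
      have hqmem : q ∈ parent := hsub i hiL hqK.1
      have hwmem : w ∈ parent := hsub i hiL hw.1
      have hreach_p : reachIn G parent x₀ p := reachIn_mono (hsub i₀ hi₀L) hpK.2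
      have hstep : reachIn G parent p q := Relation.ReflTransGen.single ⟨hpmem, hqmem, hadj⟩
      have hqw : reachIn G parent q w :=
        reachIn_mono (hsub i hiL) ((reachIn_symm hqK.2).trans hw.2)
      exact ⟨hwmem, (hreach_p.trans hstep).trans hqw⟩
  have hCfin : (clusterIn G parent x₀).Finite :=
    (hblock_finite L n (j + 1) u).subset (clusterIn_subset _ _ _)
  have h1 : ∑ i ∈ I, (Kmax j (u * L + i)).ncard ≤ (clusterIn G parent x₀).ncard := by
    apply sum_ncard_le _ hCfin I _ claim
    intro i hi i' hi' hne
    exact Set.disjoint_of_subset (hKsub i (hIL i hi)) (hKsub i' (hIL i' hi'))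
      (hdisjblock i i' hne)
  exact h1.trans (hKmaximal (j + 1) u hjk hu x₀ hx₀p)

lemma key_induction (L n k : ℕ) (hL : 2 ≤ L)
    (θ : ℝ) (hθ1 : 0.9 ≤ θ) (hθL : 0.4 ≤ θ * (1 - 1 / (L : ℝ)))
    (G : SimpleGraph ℕ) (Kmax : ℕ → ℕ → Set ℕ)
    (hKcluster : ∀ j b, j ≤ k → b < L ^ (k - j) →
      ∃ x ∈ hblock L n j b, Kmax j b = clusterIn G (hblock L n j b) x)
    (hKmaximal : ∀ j b, j ≤ k → b < L ^ (k - j) →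
      ∀ x ∈ hblock L n j b,
        (clusterIn G (hblock L n j b) x).ncard ≤ (Kmax j b).ncard)
    (hnice : ∀ j u, 1 ≤ j → j ≤ k → u < L ^ (k - j) →
      ∀ i i' : ℕ, i < L → i' < L → i ≠ i' →
        0.4 * (L : ℝ) ^ (n + j - 1) ≤ ((Kmax (j - 1) (u * L + i)).ncard : ℝ) →
        0.4 * (L : ℝ) ^ (n + j - 1) ≤ ((Kmax (j - 1) (u * L + i')).ncard : ℝ) →
        ∃ x ∈ Kmax (j - 1) (u * L + i), ∃ y ∈ Kmax (j - 1) (u * L + i'), G.Adj x y)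
    (b₀ : ℕ)
    (hgood : ∀ b : ℕ, b < L ^ k → b ≠ b₀ →
      θ * (L : ℝ) ^ n ≤ ((Kmax 0 b).ncard : ℝ)) :
    ∀ j, j ≤ k → ∃ c : ℕ, ∀ b, b < L ^ (k - j) →
      ((1 - ((L : ℝ) ^ j)⁻¹) * θ * (L : ℝ) ^ (n + j) ≤ ((Kmax j b).ncard : ℝ)) ∧
      (b ≠ c → θ * (L : ℝ) ^ (n + j) ≤ ((Kmax j b).ncard : ℝ)) := by
  have hL0 : (0 : ℝ) < L := by positivity
  have hLne : (L : ℝ) ≠ 0 := ne_of_gt hL0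
  have hθpos : (0 : ℝ) < θ := by linarith
  have h04θ : (0.4 : ℝ) ≤ θ := by linarith
  intro j
  induction j with
  | zero =>
    intro _
    refine ⟨b₀, fun b hb => ⟨?_, fun hne => ?_⟩⟩
    · simp only [pow_zero, inv_one, sub_self, zero_mul]
      positivity
    · simpa using hgood b (by simpa using hb) hne
  | succ j ih =>
    intro hjk1
    obtain ⟨c, hc⟩ := ih (by omega)
    refine ⟨c / L, fun u hu => ?_⟩
    have hchildlt : ∀ i, i < L → u * L + i < L ^ (k - j) := by
      intro i hi
      have hpe : k - (j + 1) + 1 = k - j := by omega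
      calc u * L + i < (u + 1) * L := by nlinarith
        _ ≤ L ^ (k - (j + 1)) * L := Nat.mul_le_mul_right _ hu
        _ = L ^ (k - (j + 1) + 1) := (pow_succ L _).symm
        _ = L ^ (k - j) := by rw [hpe]
    have hPpos : (0 : ℝ) < (L : ℝ) ^ (n + j) := by positivity
    -- bound for a good child
    have hgoodbig : ∀ i, i < L → u * L + i ≠ c →
        0.4 * (L : ℝ) ^ (n + j) ≤ ((Kmax j (u * L + i)).ncard : ℝ) := by
      intro i hi hne
      have := (hc (u * L + i) (hchildlt i hi)).2 hne
      nlinarith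
    have hgoodval : ∀ i, i < L → u * L + i ≠ c →
        θ * (L : ℝ) ^ (n + j) ≤ ((Kmax j (u * L + i)).ncard : ℝ) := by
      intro i hi hne
      exact (hc (u * L + i) (hchildlt i hi)).2 hne
    by_cases hbad : ∃ i₀, i₀ < L ∧ u * L + i₀ = c
    · -- the bad block is among the children
      obtain ⟨i₀, hi₀L, hi₀c⟩ := hbad
      have hcu : c / L = u := by
        subst hi₀c
        rw [mul_comm, Nat.mul_add_div (by omega), Nat.div_eq_of_lt hi₀L]
        omega
      have hne_imp : ∀ i, i < L → u * L + i = c → i = i₀ := by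
        intro i hi h; omega
      rcases Nat.eq_zero_or_pos j with hj0 | hj1
      · -- j = 0 : drop the bad child
        subst hj0
        set I : Finset ℕ := (Finset.range L).erase i₀ with hIdef
        have hIL : ∀ i ∈ I, i < L := by
          intro i hi
          exact Finset.mem_range.mp (Finset.mem_of_mem_erase hi)
        have hInotc : ∀ i ∈ I, u * L + i ≠ c := by
          intro i hi h
          exact (Finset.ne_of_mem_erase hi) (hne_imp i (hIL i hi) h)
        have hInone : I.Nonempty := by
          rw [← Finset.card_pos, hIdef,
            Finset.card_erase_of_mem (Finset.mem_range.mpr hi₀L), Finset.card_range]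
          omega
        have hcard : I.card = L - 1 := by
          rw [hIdef, Finset.card_erase_of_mem (Finset.mem_range.mpr hi₀L), Finset.card_range]
        have hsum := merge_step L n k hL G Kmax hKcluster hKmaximal hnice 0 u hjk1 hu I
          hInone hIL (fun i hi => hgoodbig i (hIL i hi) (hInotc i hi))
        have hsumR : ((L : ℝ) - 1) * (θ * (L : ℝ) ^ (n + 0)) ≤
            ((Kmax (0 + 1) u).ncard : ℝ) := by
          have h2 : ∀ i ∈ I, θ * (L : ℝ) ^ (n + 0) ≤ ((Kmax 0 (u * L + i)).ncard : ℝ) :=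
            fun i hi => hgoodval i (hIL i hi) (hInotc i hi)
          have h3 := Finset.sum_le_sum h2
          rw [Finset.sum_const, hcard] at h3
          have h4 : ((L : ℝ) - 1) * (θ * (L : ℝ) ^ (n + 0)) =
              (L - 1 : ℕ) • (θ * (L : ℝ) ^ (n + 0)) := by
            rw [nsmul_eq_mul]
            congr 1
            push_cast [Nat.cast_sub (by omega : 1 ≤ L)]
            ring
          rw [h4]
          refine h3.trans ?_
          calc (∑ i ∈ I, ((Kmax 0 (u * L + i)).ncard : ℝ))
              = ((∑ i ∈ I, (Kmax 0 (u * L + i)).ncard : ℕ) : ℝ) := by push_cast; ring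
            _ ≤ ((Kmax (0 + 1) u).ncard : ℝ) := by exact_mod_cast hsum
        constructor
        · refine le_trans (le_of_eq ?_) hsumR
          rw [pow_one]
          have : (L : ℝ) ^ (n + (0 + 1)) = (L : ℝ) ^ (n + 0) * L := by
            rw [← pow_succ]
          rw [this]
          field_simp
        · intro hne
          exact absurd hcu.symm hne
      · -- j ≥ 1 : the bad child's cluster is big enough to merge too
        have hLj : (L : ℝ) ≤ (L : ℝ) ^ j := by
          calc (L : ℝ) = (L : ℝ) ^ 1 := (pow_one _).symm
            _ ≤ (L : ℝ) ^ j := pow_le_pow_right₀ (by exact_mod_cast (by omega : 1 ≤ L)) hj1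
        have hinv : ((L : ℝ) ^ j)⁻¹ ≤ 1 / L := by
          rw [one_div]
          exact inv_anti₀ hL0 hLj
        have hbadfac : (0.4 : ℝ) ≤ (1 - ((L : ℝ) ^ j)⁻¹) * θ := by
          have h1 : θ * (1 - 1 / (L : ℝ)) ≤ (1 - ((L : ℝ) ^ j)⁻¹) * θ := by
            nlinarith
          linarith
        have hbadbig : 0.4 * (L : ℝ) ^ (n + j) ≤ ((Kmax j (u * L + i₀)).ncard : ℝ) := by
          have := (hc (u * L + i₀) (hchildlt i₀ hi₀L)).1
          nlinarith
        have hbig : ∀ i ∈ Finset.range L,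
            0.4 * (L : ℝ) ^ (n + j) ≤ ((Kmax j (u * L + i)).ncard : ℝ) := by
          intro i hi
          by_cases h : u * L + i = c
          · have : i = i₀ := hne_imp i (Finset.mem_range.mp hi) h
            subst this; exact hbadbig
          · exact hgoodbig i (Finset.mem_range.mp hi) h
        have hsum := merge_step L n k hL G Kmax hKcluster hKmaximal hnice j u hjk1 hu
          (Finset.range L) ⟨0, Finset.mem_range.mpr (by omega)⟩
          (fun i hi => Finset.mem_range.mp hi) hbig
        -- real lower bound on the sum
        have hterm : ∀ i ∈ Finset.range L,
            θ * (L : ℝ) ^ (n + j) +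
              (if i = i₀ then (1 - ((L : ℝ) ^ j)⁻¹) * θ * (L : ℝ) ^ (n + j)
                - θ * (L : ℝ) ^ (n + j) else 0) ≤
              ((Kmax j (u * L + i)).ncard : ℝ) := by
          intro i hi
          by_cases h : i = i₀
          · subst h
            rw [if_pos rfl]
            have h1 := (hc (u * L + i) (hchildlt i (Finset.mem_range.mp hi))).1
            linarith
          · simp only [if_neg h]
            rw [add_zero]
            exact hgoodval i (Finset.mem_range.mp hi) (fun hh => h (hne_imp i (Finset.mem_range.mp hi) hh))
        have hsumR := Finset.sum_le_sum hterm
        rw [Finset.sum_add_distrib, Finset.sum_const, Finset.card_range,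
          Finset.sum_ite_eq' (Finset.range L) i₀, if_pos (Finset.mem_range.mpr hi₀L)] at hsumR
        have hcast : (∑ i ∈ Finset.range L, ((Kmax j (u * L + i)).ncard : ℝ)) ≤
            ((Kmax (j + 1) u).ncard : ℝ) := by
          calc (∑ i ∈ Finset.range L, ((Kmax j (u * L + i)).ncard : ℝ))
              = ((∑ i ∈ Finset.range L, (Kmax j (u * L + i)).ncard : ℕ) : ℝ) := by
                push_cast; ring
            _ ≤ _ := by exact_mod_cast hsum
        have hfinal : (1 - ((L : ℝ) ^ (j + 1))⁻¹) * θ * (L : ℝ) ^ (n + (j + 1)) =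
            L • (θ * (L : ℝ) ^ (n + j)) +
              ((1 - ((L : ℝ) ^ j)⁻¹) * θ * (L : ℝ) ^ (n + j) - θ * (L : ℝ) ^ (n + j)) := by
          rw [nsmul_eq_mul]
          have hjne : ((L : ℝ) ^ j) ≠ 0 := by positivity
          have hj1ne : ((L : ℝ) ^ (j + 1)) ≠ 0 := by positivity
          field_simp
          ring
        constructor
        · rw [hfinal]
          exact le_trans hsumR hcast
        · intro hne
          exact absurd hcu.symm hne
    · -- all children good
      push_neg at hbad
      have hnotc : ∀ i, i < L → u * L + i ≠ c := fun i hi => hbad i hi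
      have hsum := merge_step L n k hL G Kmax hKcluster hKmaximal hnice j u hjk1 hu
        (Finset.range L) ⟨0, Finset.mem_range.mpr (by omega)⟩
        (fun i hi => Finset.mem_range.mp hi)
        (fun i hi => hgoodbig i (Finset.mem_range.mp hi) (hnotc i (Finset.mem_range.mp hi)))
      have h2 : ∀ i ∈ Finset.range L,
          θ * (L : ℝ) ^ (n + j) ≤ ((Kmax j (u * L + i)).ncard : ℝ) :=
        fun i hi => hgoodval i (Finset.mem_range.mp hi) (hnotc i (Finset.mem_range.mp hi))
      have h3 := Finset.sum_le_sum h2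
      rw [Finset.sum_const, Finset.card_range] at h3
      have hcast : (∑ i ∈ Finset.range L, ((Kmax j (u * L + i)).ncard : ℝ)) ≤
          ((Kmax (j + 1) u).ncard : ℝ) := by
        calc (∑ i ∈ Finset.range L, ((Kmax j (u * L + i)).ncard : ℝ))
            = ((∑ i ∈ Finset.range L, (Kmax j (u * L + i)).ncard : ℕ) : ℝ) := by
              push_cast; ring
          _ ≤ _ := by exact_mod_cast hsum
      have hθfull : θ * (L : ℝ) ^ (n + (j + 1)) ≤ ((Kmax (j + 1) u).ncard : ℝ) := by
        have heq : θ * (L : ℝ) ^ (n + (j + 1)) = L • (θ * (L : ℝ) ^ (n + j)) := by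
          rw [nsmul_eq_mul]
          ring
        rw [heq]
        exact le_trans h3 hcast
      refine ⟨?_, fun _ => hθfull⟩
      have hfac : (1 - ((L : ℝ) ^ (j + 1))⁻¹) ≤ 1 := by
        have : (0 : ℝ) < ((L : ℝ) ^ (j + 1))⁻¹ := by positivity
        linarith
      nlinarith [hθfull, hPpos, hθpos, mul_pos hθpos (show (0:ℝ) < (L:ℝ)^(n+(j+1)) by positivity)]

/-- Claim niceness: if each `n`-block of `Λ_{n+k}` except possibly one carries a largest
cluster of density at least `θ`, and every block at level `n+j` (`j = 1,…,k`) is nice —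
any two children sub-blocks whose largest clusters have density `≥ 0.4` have those
largest clusters joined by an open edge — and `θ·(1 - 1/L) ≥ 0.4`, `θ ≥ 0.9`, then
`Λ_{n+k}` contains a cluster of size at least `(1 - L^{-k})·θ·L^{n+k}`. -/
theorem stmt_19 (L n k : ℕ) (hL : 2 ≤ L) (hn : 1 ≤ n) (hk : 1 ≤ k)
    (θ : ℝ) (hθ1 : 0.9 ≤ θ) (hθ2 : θ ≤ 1) (hθL : 0.4 ≤ θ * (1 - 1 / (L : ℝ)))
    (G : SimpleGraph ℕ)
    (Kmax : ℕ → ℕ → Set ℕ)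
    (hKcluster : ∀ j b, j ≤ k → b < L ^ (k - j) →
      ∃ x ∈ hblock L n j b, Kmax j b = clusterIn G (hblock L n j b) x)
    (hKmaximal : ∀ j b, j ≤ k → b < L ^ (k - j) →
      ∀ x ∈ hblock L n j b,
        (clusterIn G (hblock L n j b) x).ncard ≤ (Kmax j b).ncard)
    (hgood : ∃ b₀ : ℕ, ∀ b : ℕ, b < L ^ k → b ≠ b₀ →
      θ * (L : ℝ) ^ n ≤ ((Kmax 0 b).ncard : ℝ))
    (hnice : ∀ j u, 1 ≤ j → j ≤ k → u < L ^ (k - j) →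
      ∀ i i' : ℕ, i < L → i' < L → i ≠ i' →
        0.4 * (L : ℝ) ^ (n + j - 1) ≤ ((Kmax (j - 1) (u * L + i)).ncard : ℝ) →
        0.4 * (L : ℝ) ^ (n + j - 1) ≤ ((Kmax (j - 1) (u * L + i')).ncard : ℝ) →
        ∃ x ∈ Kmax (j - 1) (u * L + i), ∃ y ∈ Kmax (j - 1) (u * L + i'), G.Adj x y) :
    ∃ x ∈ hblock L n k 0,
      (1 - (L : ℝ) ^ (-(k : ℤ))) * θ * (L : ℝ) ^ (n + k) ≤
        ((clusterIn G (hblock L n k 0) x).ncard : ℝ) := by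
  obtain ⟨b₀, hg⟩ := hgood
  obtain ⟨c, hc⟩ := key_induction L n k hL θ hθ1 hθL G Kmax hKcluster hKmaximal hnice b₀ hg
    k le_rfl
  have h01 : (0 : ℕ) < L ^ (k - k) := by simp [Nat.sub_self]
  have hb := (hc 0 h01).1
  obtain ⟨x, hx, hEq⟩ := hKcluster k 0 le_rfl h01
  refine ⟨x, hx, ?_⟩
  rw [hEq] at hb
  rw [show (L : ℝ) ^ (-(k : ℤ)) = ((L : ℝ) ^ k)⁻¹ by rw [zpow_neg, zpow_natCast]]
  exact hb
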